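/- Let U ∈ ℝ_max^{n×n}, g ∈ ℝ_max^n and h ∈ (ℝ ∪ {+∞})^n, and let U* = I ⊕ U ⊕ ⋯ ⊕ U^{n−1}. Then the set P = { x ∈ ℝ^n : g ≤ x ≤ h and U ⊗ x ≤ x } is nonempty if and only if ρ(U) ≤ 0 and U* ⊗ g ≤ h. -/

import Mathlib

/-- Max-plus identity matrix: `0` on the diagonal, `−∞` off it. -/
noncomputable def mpId (n : ℕ) : Fin n → Fin n → EReal := fun i j => if i = j then 0 else ⊥

/-- Max-plus matrix product. -/
noncomputable def mpMul {n : ℕ} (A B : Fin n → Fin n → EReal) : Fin n → Fin n → EReal :=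
  fun i j => ⨆ k, A i k + B k j

/-- Max-plus matrix powers, `A^0 = I`. -/
noncomputable def mpPow {n : ℕ} (A : Fin n → Fin n → EReal) : ℕ → Fin n → Fin n → EReal
  | 0 => mpId n
  | k + 1 => mpMul (mpPow A k) A

/-- Kleene star truncation `A* = I ⊕ A ⊕ ⋯ ⊕ A^{n−1}` (entrywise maximum). -/
noncomputable def mpStar {n : ℕ} (A : Fin n → Fin n → EReal) : Fin n → Fin n → EReal :=
  fun i j => ⨆ k : Fin n, mpPow A (k : ℕ) i j

/-- Maximum cycle mean `ρ(A)`: the supremum, over all closed walks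
`f 0, f 1, …, f k = f 0` (`k ≥ 1`), of the mean weight of the walk.  A walk using
a `−∞` arc has mean `−∞`, so this equals the maximum mean over elementary cycles
of the digraph of finite entries, and it is `−∞` when that digraph is acyclic. -/
noncomputable def rho {n : ℕ} (A : Fin n → Fin n → EReal) : EReal :=
  ⨆ (k : ℕ) (_ : 0 < k) (f : ℕ → Fin n) (_ : f k = f 0),
    (((k : ℝ)⁻¹ : ℝ) : EReal) * ∑ i ∈ Finset.range k, A (f i) (f (i + 1))

/-! ### Auxiliary material -/

namespace MPAux

lemma add_coe_le_iff {a b : EReal} {r : ℝ} : a + (r : EReal) ≤ b ↔ a ≤ b - (r : EReal) :=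
  (EReal.le_sub_iff_add_le (Or.inl (EReal.coe_ne_bot r)) (Or.inl (EReal.coe_ne_top r))).symm

lemma iSup_add_coe_le_iff {ι : Sort*} (F : ι → EReal) (r : ℝ) (b : EReal) :
    (⨆ i, F i) + (r : EReal) ≤ b ↔ ∀ i, F i + (r : EReal) ≤ b := by
  rw [add_coe_le_iff, iSup_le_iff]
  exact forall_congr' fun i => add_coe_le_iff.symm

lemma iSup_ne_top {ι : Type*} [Finite ι] [Nonempty ι] (F : ι → EReal) (h : ∀ i, F i ≠ ⊤) :
    (⨆ i, F i) ≠ ⊤ := by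
  obtain ⟨i0, hi0⟩ := Finite.exists_max F
  exact ((iSup_le hi0).trans_lt (h i0).lt_top).ne

lemma exists_real_ge (a : EReal) (h : a ≠ ⊤) : ∃ r : ℝ, a ≤ (r : EReal) := by
  induction a with
  | bot => exact ⟨0, bot_le⟩
  | coe s => exact ⟨s, le_refl _⟩
  | top => exact absurd rfl h

lemma exists_real_le (a : EReal) (h : a ≠ ⊥) : ∃ r : ℝ, (r : EReal) ≤ a := by
  induction a with
  | bot => exact absurd rfl h
  | coe s => exact ⟨s, le_refl _⟩
  | top => exact ⟨0, le_top⟩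

lemma coe_mul_nonpos {c : ℝ} (hc : 0 ≤ c) {S : EReal} (hS : S ≤ 0) : (c : EReal) * S ≤ 0 := by
  induction S with
  | bot =>
    rcases eq_or_lt_of_le hc with h | h
    · rw [← h]; simp
    · rw [EReal.coe_mul_bot_of_pos h]; exact bot_le
  | coe s =>
    rw [← EReal.coe_mul]
    have hs : s ≤ 0 := by exact_mod_cast hS
    have : c * s ≤ 0 := mul_nonpos_iff.mpr (Or.inl ⟨hc, hs⟩)
    exact_mod_cast this
  | top => exact absurd hS (by simp)

/-- Weight of the walk `f 0, f 1, …, f m`. -/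
noncomputable def wt {n : ℕ} (U : Fin n → Fin n → EReal) (f : ℕ → Fin n) (m : ℕ) : EReal :=
  ∑ t ∈ Finset.range m, U (f t) (f (t + 1))

variable {n : ℕ}

lemma wt_ne_top {U : Fin n → Fin n → EReal} (hU : ∀ i j, U i j ≠ ⊤) (f : ℕ → Fin n) (m : ℕ) :
    wt U f m ≠ ⊤ := by
  induction m with
  | zero => simp [wt]
  | succ m ih =>
    simp only [wt, Finset.sum_range_succ]
    exact (EReal.add_lt_top (by simpa [wt] using ih) (hU _ _)).ne

lemma wt_le_pow (U : Fin n → Fin n → EReal) (m : ℕ) (f : ℕ → Fin n) :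
    wt U f m ≤ mpPow U m (f 0) (f m) := by
  induction m with
  | zero => simp [wt, mpPow, mpId]
  | succ m ih =>
    have h1 : wt U f (m + 1) = wt U f m + U (f m) (f (m + 1)) := by
      simp only [wt, Finset.sum_range_succ]
    rw [h1]
    calc wt U f m + U (f m) (f (m + 1))
        ≤ mpPow U m (f 0) (f m) + U (f m) (f (m + 1)) := add_le_add_left ih _
      _ ≤ ⨆ k, mpPow U m (f 0) k + U k (f (m + 1)) :=
          le_iSup (fun k => mpPow U m (f 0) k + U k (f (m + 1))) (f m)
      _ = mpPow U (m + 1) (f 0) (f (m + 1)) := rfl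

/-- Append the vertex `j` after position `m` of the walk `f`. -/
noncomputable def appendLast (m : ℕ) (f : ℕ → Fin n) (j : Fin n) : ℕ → Fin n :=
  fun v => if v ≤ m then f v else j

lemma appendLast_le {m v : ℕ} (f : ℕ → Fin n) (j : Fin n) (h : v ≤ m) :
    appendLast m f j v = f v := if_pos h

lemma appendLast_gt {m v : ℕ} (f : ℕ → Fin n) (j : Fin n) (h : m < v) :
    appendLast m f j v = j := if_neg (by omega)

lemma pow_le_of_wt_le {U : Fin n → Fin n → EReal} (hU : ∀ i j, U i j ≠ ⊤) :
    ∀ (m : ℕ) (i j : Fin n) {b : EReal},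
      (∀ f : ℕ → Fin n, f 0 = i → f m = j → wt U f m ≤ b) → mpPow U m i j ≤ b := by
  intro m
  induction m with
  | zero =>
    intro i j b hb
    by_cases hij : i = j
    · subst hij
      have := hb (fun _ => i) rfl rfl
      simpa [wt, mpPow, mpId] using this
    · simp [mpPow, mpId, hij]
  | succ m ih =>
    intro i j b hb
    show (⨆ k, mpPow U m i k + U k j) ≤ b
    refine iSup_le fun k => ?_
    have key : ∀ c : EReal, U k j = c → mpPow U m i k + c ≤ b := by
      intro c
      induction c with
      | bot => intro _; simp
      | top => intro hc; exact absurd hc (hU k j)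
      | coe r =>
        intro hc
        rw [add_coe_le_iff]
        refine ih i k ?_
        intro f hf0 hfm
        rw [← add_coe_le_iff]
        have h0' : appendLast m f j 0 = i := (appendLast_le f j (Nat.zero_le m)).trans hf0
        have hm1 : appendLast m f j (m + 1) = j := appendLast_gt f j (Nat.lt_succ_self m)
        have hwt' : wt U (appendLast m f j) (m + 1) = wt U f m + (r : EReal) := by
          simp only [wt, Finset.sum_range_succ]
          congr 1
          · refine Finset.sum_congr rfl fun v hv => ?_
            have hv' : v < m := Finset.mem_range.1 hv
            rw [appendLast_le f j (by omega), appendLast_le f j (by omega)]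
          · rw [appendLast_le f j (le_refl m), hm1, hfm, hc]
        have h5 := hb (appendLast m f j) h0' hm1
        rwa [hwt'] at h5
    exact key (U k j) rfl

lemma cycle_nonpos {U : Fin n → Fin n → EReal} (hU : ∀ i j, U i j ≠ ⊤) (hρ : rho U ≤ 0) :
    ∀ (k : ℕ), 0 < k → ∀ f : ℕ → Fin n, f k = f 0 → wt U f k ≤ 0 := by
  intro k hk f hf
  simp only [rho, iSup_le_iff] at hρ
  have h1 := hρ k hk f hf
  have hkpos : (0 : ℝ) < (k : ℝ) := by exact_mod_cast hk
  have key : ∀ S : EReal, S ≠ ⊤ → (((k : ℝ)⁻¹ : ℝ) : EReal) * S ≤ 0 → S ≤ 0 := by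
    intro S
    induction S with
    | bot => intro _ _; exact bot_le
    | top => intro hS _; exact absurd rfl hS
    | coe s =>
      intro _ hmul
      rw [← EReal.coe_mul] at hmul
      have hs : (k : ℝ)⁻¹ * s ≤ 0 := by exact_mod_cast hmul
      have hs0 : s ≤ 0 := by
        calc s = (k : ℝ) * ((k : ℝ)⁻¹ * s) := by field_simp
          _ ≤ (k : ℝ) * 0 := mul_le_mul_of_nonneg_left hs (le_of_lt hkpos)
          _ = 0 := mul_zero _
      exact_mod_cast hs0
  exact key _ (wt_ne_top hU f k) h1

/-- Splice out the piece of the walk between positions `a` and `a + d`. -/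
noncomputable def splice (a d : ℕ) (f : ℕ → Fin n) : ℕ → Fin n :=
  fun v => if v ≤ a then f v else f (v + d)

lemma splice_le {a d v : ℕ} (f : ℕ → Fin n) (h : v ≤ a) : splice a d f v = f v := if_pos h

lemma splice_gt {a d v : ℕ} (f : ℕ → Fin n) (h : a < v) : splice a d f v = f (v + d) :=
  if_neg (by omega)

lemma wt_le_star {U : Fin n → Fin n → EReal}
    (hcyc : ∀ k, 0 < k → ∀ f : ℕ → Fin n, f k = f 0 → wt U f k ≤ 0) :
    ∀ (m : ℕ) (f : ℕ → Fin n), wt U f m ≤ mpStar U (f 0) (f m) := by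
  intro m
  induction m using Nat.strong_induction_on with
  | _ m IH =>
    intro f
    by_cases hmn : m < n
    · exact (wt_le_pow U m f).trans
        (le_iSup (fun k : Fin n => mpPow U (k : ℕ) (f 0) (f m)) ⟨m, hmn⟩)
    · push_neg at hmn
      have hn : 0 < n := (f 0).pos
      obtain ⟨s, u, hsu, hfsu⟩ := Fintype.exists_ne_map_eq_of_card_lt
        (fun v : Fin (n + 1) => f (v : ℕ)) (by simp)
      have hvne : (s : ℕ) ≠ (u : ℕ) := fun hh => hsu (Fin.val_injective hh)
      set a : ℕ := min (s : ℕ) (u : ℕ) with ha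
      set c : ℕ := max (s : ℕ) (u : ℕ) with hc
      have hac : a < c := min_lt_max.mpr hvne
      have hcn : c ≤ n := max_le (Nat.lt_succ_iff.mp s.isLt) (Nat.lt_succ_iff.mp u.isLt)
      have hfac : f a = f c := by
        rcases le_total (s : ℕ) (u : ℕ) with hle | hle
        · rw [show a = (s : ℕ) from by rw [ha]; exact min_eq_left hle,
              show c = (u : ℕ) from by rw [hc]; exact max_eq_right hle]
          exact hfsu
        · rw [show a = (u : ℕ) from by rw [ha]; exact min_eq_right hle,
              show c = (s : ℕ) from by rw [hc]; exact max_eq_left hle]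
          exact hfsu.symm
      set d : ℕ := c - a with hd
      set m' : ℕ := m - d with hm'
      have ham' : a ≤ m' := by omega
      have hshift : ∀ k : ℕ, splice a d f (a + k) = f (c + k) := by
        intro k
        cases k with
        | zero =>
          simp only [Nat.add_zero]
          rw [splice_le f (le_refl a)]
          exact hfac
        | succ v =>
          rw [splice_gt f (by omega)]
          exact congrArg f (by omega)
      have h0'' : splice a d f 0 = f 0 := splice_le f (Nat.zero_le a)
      have hm'' : splice a d f m' = f m := by
        rcases eq_or_lt_of_le ham' with he | hlt
        · rw [splice_le f (le_of_eq he.symm)]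
          have h7 : f m' = f a := congrArg f he.symm
          rw [h7, hfac]
          exact congrArg f (by omega)
        · rw [splice_gt f hlt]
          exact congrArg f (by omega)
      have e2 : wt U (splice a d f) m' =
          (∑ v ∈ Finset.range a, U (f v) (f (v + 1))) +
            ∑ v ∈ Finset.Ico c m, U (f v) (f (v + 1)) := by
        have h2 := Finset.sum_Ico_consecutive
          (fun v => U (splice a d f v) (splice a d f (v + 1))) (Nat.zero_le a) ham'
        have h3 : (∑ v ∈ Finset.Ico 0 a, U (splice a d f v) (splice a d f (v + 1))) =
            ∑ v ∈ Finset.range a, U (f v) (f (v + 1)) := by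
          rw [← Finset.range_eq_Ico]
          refine Finset.sum_congr rfl fun v hv => ?_
          have hv' := Finset.mem_range.1 hv
          rw [splice_le f (by omega), splice_le f (by omega)]
        have h4 : (∑ v ∈ Finset.Ico a m', U (splice a d f v) (splice a d f (v + 1))) =
            ∑ v ∈ Finset.Ico c m, U (f v) (f (v + 1)) := by
          rw [Finset.sum_Ico_eq_sum_range, Finset.sum_Ico_eq_sum_range,
            show m' - a = m - c from by omega]
          refine Finset.sum_congr rfl fun k _ => ?_
          rw [show a + k + 1 = a + (k + 1) from by omega, hshift k, hshift (k + 1)]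
          exact congrArg (U (f (c + k))) (congrArg f (by omega))
        simp only [wt]
        rw [Finset.range_eq_Ico, ← h2, h3, h4, Finset.range_eq_Ico]
      have e1 : wt U f m =
          (∑ v ∈ Finset.range a, U (f v) (f (v + 1))) +
            ((∑ v ∈ Finset.Ico a c, U (f v) (f (v + 1))) +
              ∑ v ∈ Finset.Ico c m, U (f v) (f (v + 1))) := by
        have h5 := Finset.sum_Ico_consecutive
          (fun v => U (f v) (f (v + 1))) (le_of_lt hac) (show c ≤ m from by omega)
        have h6 := Finset.sum_Ico_consecutive
          (fun v => U (f v) (f (v + 1))) (Nat.zero_le a) (show a ≤ m from by omega)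
        simp only [wt]
        rw [Finset.range_eq_Ico, ← h6, ← h5, ← Finset.range_eq_Ico]
      have hC : (∑ v ∈ Finset.Ico a c, U (f v) (f (v + 1))) ≤ 0 := by
        have hcy := hcyc d (by omega) (fun s => f (a + s)) (by
          show f (a + d) = f (a + 0)
          rw [Nat.add_zero, show a + d = c from by omega]
          exact hfac.symm)
        have he : (∑ v ∈ Finset.Ico a c, U (f v) (f (v + 1))) = wt U (fun s => f (a + s)) d := by
          simp only [wt]
          rw [Finset.sum_Ico_eq_sum_range, show c - a = d from by omega]
          exact Finset.sum_congr rfl fun k _ => rfl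
        rw [he]; exact hcy
      have e3 : ∀ X Y Z : EReal, X + (Y + Z) = (X + Z) + Y := fun X Y Z => by
        rw [add_comm Y Z, ← add_assoc]
      calc wt U f m = _ := e1
        _ = ((∑ v ∈ Finset.range a, U (f v) (f (v + 1))) +
              ∑ v ∈ Finset.Ico c m, U (f v) (f (v + 1))) +
            ∑ v ∈ Finset.Ico a c, U (f v) (f (v + 1)) := e3 _ _ _
        _ ≤ ((∑ v ∈ Finset.range a, U (f v) (f (v + 1))) +
              ∑ v ∈ Finset.Ico c m, U (f v) (f (v + 1))) + 0 := add_le_add_right hC _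
        _ = (∑ v ∈ Finset.range a, U (f v) (f (v + 1))) +
              ∑ v ∈ Finset.Ico c m, U (f v) (f (v + 1)) := add_zero _
        _ = wt U (splice a d f) m' := e2.symm
        _ ≤ mpStar U (splice a d f 0) (splice a d f m') := IH m' (by omega) (splice a d f)
        _ = mpStar U (f 0) (f m) := by rw [h0'', hm'']

lemma pow_ne_top {U : Fin n → Fin n → EReal} (hU : ∀ i j, U i j ≠ ⊤) :
    ∀ (m : ℕ) (i j : Fin n), mpPow U m i j ≠ ⊤ := by
  intro m
  induction m with
  | zero =>
    intro i j
    simp only [mpPow, mpId]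
    split <;> simp
  | succ m ih =>
    intro i j
    haveI : Nonempty (Fin n) := ⟨i⟩
    show (⨆ k, mpPow U m i k + U k j) ≠ ⊤
    exact iSup_ne_top _ fun k => (EReal.add_lt_top (ih i k) (hU k j)).ne

lemma star_ne_top {U : Fin n → Fin n → EReal} (hU : ∀ i j, U i j ≠ ⊤) (i j : Fin n) :
    mpStar U i j ≠ ⊤ :=
  haveI : Nonempty (Fin n) := ⟨i⟩
  iSup_ne_top _ fun k => pow_ne_top hU (k : ℕ) i j

lemma zero_le_star_diag (U : Fin n → Fin n → EReal) (i : Fin n) : (0 : EReal) ≤ mpStar U i i := by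
  refine le_trans ?_ (le_iSup (fun k : Fin n => mpPow U (k : ℕ) i i) ⟨0, i.pos⟩)
  simp [mpPow, mpId]

/-- Prepend the vertex `i` before the walk `f`. -/
noncomputable def prepend (i : Fin n) (f : ℕ → Fin n) : ℕ → Fin n
  | 0 => i
  | s + 1 => f s

@[simp] lemma prepend_zero (i : Fin n) (f : ℕ → Fin n) : prepend i f 0 = i := rfl

@[simp] lemma prepend_succ (i : Fin n) (f : ℕ → Fin n) (s : ℕ) : prepend i f (s + 1) = f s := rfl

lemma add_star_le_star {U : Fin n → Fin n → EReal} (hU : ∀ i j, U i j ≠ ⊤)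
    (hcyc : ∀ k, 0 < k → ∀ f : ℕ → Fin n, f k = f 0 → wt U f k ≤ 0)
    (i j k : Fin n) : U i j + mpStar U j k ≤ mpStar U i k := by
  have key : ∀ c : EReal, U i j = c → c + mpStar U j k ≤ mpStar U i k := by
    intro c
    induction c with
    | bot => intro _; simp
    | top => intro hc; exact absurd hc (hU i j)
    | coe p =>
      intro hc
      rw [add_comm]
      show (⨆ m : Fin n, mpPow U (m : ℕ) j k) + ((p : ℝ) : EReal) ≤ mpStar U i k
      rw [iSup_add_coe_le_iff]
      intro m
      rw [add_coe_le_iff]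
      refine pow_le_of_wt_le hU (m : ℕ) j k ?_
      intro f h0 hm
      rw [← add_coe_le_iff]
      have hwt' : wt U (prepend i f) ((m : ℕ) + 1) = wt U f (m : ℕ) + ((p : ℝ) : EReal) := by
        simp only [wt]
        rw [Finset.sum_range_succ']
        congr 1
        show U i (f 0) = ((p : ℝ) : EReal)
        rw [h0]; exact hc
      have h4 := wt_le_star hcyc ((m : ℕ) + 1) (prepend i f)
      rw [hwt', show prepend i f 0 = i from rfl,
        show prepend i f ((m : ℕ) + 1) = f (m : ℕ) from rfl, hm] at h4
      exact h4
  exact key (U i j) rfl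

end MPAux

open MPAux in
/-- The alcoved polyhedron `P = {x ∈ ℝ^n : g ≤ x ≤ h, U ⊗ x ≤ x}` is nonempty iff
`ρ(U) ≤ 0` and `U* ⊗ g ≤ h`, where `U ∈ ℝ_max^{n×n}`, `g ∈ ℝ_max^n`,
`h ∈ (ℝ ∪ {+∞})^n`. -/
theorem stmt8 (n : ℕ) (U : Fin n → Fin n → EReal) (g h : Fin n → EReal)
    (hU : ∀ i j, U i j ≠ ⊤) (hg : ∀ i, g i ≠ ⊤) (hh : ∀ i, h i ≠ ⊥) :
    (∃ x : Fin n → ℝ, ∀ i, g i ≤ (x i : EReal) ∧ (x i : EReal) ≤ h i ∧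
        (⨆ j, U i j + (x j : EReal)) ≤ (x i : EReal)) ↔
    (rho U ≤ 0 ∧ ∀ i, (⨆ j, mpStar U i j + g j) ≤ h i) := by
  constructor
  · rintro ⟨x, hx⟩
    have harc : ∀ i j, U i j ≤ ((x i - x j : ℝ) : EReal) := by
      intro i j
      have h1 : U i j + (x j : EReal) ≤ (x i : EReal) :=
        le_trans (le_iSup (fun j => U i j + (x j : EReal)) j) (hx i).2.2
      rw [EReal.coe_sub]
      exact add_coe_le_iff.mp h1
    have hwt : ∀ (m : ℕ) (f : ℕ → Fin n), wt U f m ≤ ((x (f 0) - x (f m) : ℝ) : EReal) := by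
      intro m
      induction m with
      | zero => intro f; simp [wt]
      | succ m ih =>
        intro f
        have h1 : wt U f (m + 1) = wt U f m + U (f m) (f (m + 1)) := by
          simp only [wt, Finset.sum_range_succ]
        rw [h1]
        calc wt U f m + U (f m) (f (m + 1))
            ≤ ((x (f 0) - x (f m) : ℝ) : EReal) + ((x (f m) - x (f (m + 1)) : ℝ) : EReal) :=
              add_le_add (ih f) (harc (f m) (f (m + 1)))
          _ = ((x (f 0) - x (f (m + 1)) : ℝ) : EReal) := by
              rw [← EReal.coe_add]
              exact congrArg Real.toEReal (by ring)
    constructor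
    · simp only [rho]
      refine iSup_le fun k => iSup_le fun hk => iSup_le fun f => iSup_le fun hf => ?_
      have hS : wt U f k ≤ 0 := by
        have h2 := hwt k f
        rw [hf] at h2
        simpa using h2
      exact coe_mul_nonpos (by positivity) hS
    · intro i
      refine iSup_le fun j => ?_
      have h2 : mpStar U i j + (x j : EReal) ≤ (x i : EReal) := by
        show (⨆ m : Fin n, mpPow U (m : ℕ) i j) + ((x j : ℝ) : EReal) ≤ (x i : EReal)
        rw [iSup_add_coe_le_iff]
        intro m
        rw [add_coe_le_iff, ← EReal.coe_sub]
        refine pow_le_of_wt_le hU (m : ℕ) i j ?_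
        intro f h0 hm
        have h3 := hwt (m : ℕ) f
        rwa [h0, hm] at h3
      calc mpStar U i j + g j ≤ mpStar U i j + (x j : EReal) := add_le_add_right (hx j).1 _
        _ ≤ (x i : EReal) := h2
        _ ≤ h i := (hx i).2.1
  · rintro ⟨hρ, hstar⟩
    rcases Nat.eq_zero_or_pos n with hn0 | hn
    · subst hn0
      exact ⟨fun i => i.elim0, fun i => i.elim0⟩
    · have hcyc := cycle_nonpos hU hρ
      haveI : Nonempty (Fin n) := ⟨⟨0, hn⟩⟩
      obtain ⟨p0, hp0⟩ := Finite.exists_max fun p : Fin n × Fin n => mpStar U p.1 p.2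
      obtain ⟨M, hM⟩ := exists_real_ge _ (star_ne_top hU p0.1 p0.2)
      have hMall : ∀ i j, mpStar U i j ≤ (M : EReal) := fun i j => le_trans (hp0 (i, j)) hM
      have hex : ∀ i, ∃ r : ℝ, (r : EReal) ≤ h i := fun i => exists_real_le _ (hh i)
      choose r hr using hex
      obtain ⟨i0, hi0⟩ := Finite.exists_max fun i => -(r i)
      have hbh : ∀ i, ((r i0 : ℝ) : EReal) ≤ h i := by
        intro i
        refine le_trans ?_ (hr i)
        have h1 : r i0 ≤ r i := by have := hi0 i; simpa using this
        exact_mod_cast h1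
      set t : ℝ := r i0 - M with ht
      have hg'le : ∀ j : Fin n, (t : EReal) ≤ g j ⊔ (t : EReal) := fun j => le_sup_right
      have hg'top : ∀ j : Fin n, g j ⊔ (t : EReal) ≠ ⊤ :=
        fun j => (sup_lt_iff.mpr ⟨(hg j).lt_top, EReal.coe_lt_top t⟩).ne
      have hyub : ∀ i, (⨆ j, mpStar U i j + (g j ⊔ (t : EReal))) ≤ h i := by
        intro i
        refine iSup_le fun j => ?_
        rcases le_total (g j) ((t : ℝ) : EReal) with hcas | hcas
        · rw [sup_eq_right.mpr hcas]
          calc mpStar U i j + (t : EReal) ≤ (M : EReal) + (t : EReal) :=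
                add_le_add_left (hMall i j) _
            _ = ((r i0 : ℝ) : EReal) := by
                rw [← EReal.coe_add]
                exact congrArg Real.toEReal (by rw [ht]; ring)
            _ ≤ h i := hbh i
        · rw [sup_eq_left.mpr hcas]
          exact le_trans (le_iSup (fun j => mpStar U i j + g j) j) (hstar i)
      have hydiag : ∀ i, (g i ⊔ (t : EReal)) ≤ ⨆ j, mpStar U i j + (g j ⊔ (t : EReal)) := by
        intro i
        calc g i ⊔ (t : EReal) = 0 + (g i ⊔ (t : EReal)) := (zero_add _).symm
          _ ≤ mpStar U i i + (g i ⊔ (t : EReal)) := add_le_add_left (zero_le_star_diag U i) _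
          _ ≤ _ := le_iSup (fun j => mpStar U i j + (g j ⊔ (t : EReal))) i
      have hytop : ∀ i, (⨆ j, mpStar U i j + (g j ⊔ (t : EReal))) ≠ ⊤ :=
        fun i => iSup_ne_top _ fun j => (EReal.add_lt_top (star_ne_top hU i j) (hg'top j)).ne
      have hybot : ∀ i, (⨆ j, mpStar U i j + (g j ⊔ (t : EReal))) ≠ ⊥ := by
        intro i hcon
        have h1 := le_trans (hg'le i) (hydiag i)
        rw [hcon] at h1
        exact absurd (le_bot_iff.mp h1) (EReal.coe_ne_bot t)
      have hco : ∀ i, (((⨆ j, mpStar U i j + (g j ⊔ (t : EReal))).toReal : ℝ) : EReal)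
          = ⨆ j, mpStar U i j + (g j ⊔ (t : EReal)) :=
        fun i => EReal.coe_toReal (hytop i) (hybot i)
      refine ⟨fun i => (⨆ j, mpStar U i j + (g j ⊔ (t : EReal))).toReal,
        fun i => ⟨?_, ?_, ?_⟩⟩
      · rw [hco i]
        exact le_trans le_sup_left (hydiag i)
      · rw [hco i]
        exact hyub i
      · simp only [hco]
        refine iSup_le fun j => ?_
        have key : ∀ c : EReal, U i j = c →
            c + (⨆ k, mpStar U j k + (g k ⊔ (t : EReal))) ≤
              ⨆ k, mpStar U i k + (g k ⊔ (t : EReal)) := by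
          intro c
          induction c with
          | bot => intro _; simp
          | top => intro hc; exact absurd hc (hU i j)
          | coe p =>
            intro hc
            rw [add_comm ((p : ℝ) : EReal) (⨆ k, mpStar U j k + (g k ⊔ (t : EReal))),
              iSup_add_coe_le_iff]
            intro k
            have h3 : ((p : ℝ) : EReal) + mpStar U j k ≤ mpStar U i k := by
              rw [← hc]; exact add_star_le_star hU hcyc i j k
            calc mpStar U j k + (g k ⊔ (t : EReal)) + ((p : ℝ) : EReal)
                = (((p : ℝ) : EReal) + mpStar U j k) + (g k ⊔ (t : EReal)) := by
                  rw [add_comm (mpStar U j k + (g k ⊔ (t : EReal))) ((p : ℝ) : EReal),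
                    ← add_assoc]
              _ ≤ mpStar U i k + (g k ⊔ (t : EReal)) := add_le_add_left h3 _
              _ ≤ _ := le_iSup (fun k => mpStar U i k + (g k ⊔ (t : EReal))) k
        exact key (U i j) rfl
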